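/- Let m be a positive integer and q_0 relatively prime to m, and let p = (q_0, m q_1, …, m q_n), q = (q_0, q_1, …, q_n). The map f: ℂP(p) → ℂP(q) induced by (z_0, z_1, …, z_n) ↦ (z_0^m, z_1, …, z_n) is injective: if there exists λ ∈ ℂ∖{0} with (λ^{q_0} z_0^m, λ^{q_1} z_1, …, λ^{q_n} z_n) = ((z'_0)^m, z'_1, …, z'_n), then there exists μ ∈ ℂ∖{0} with (μ^{q_0} z_0, μ^{m q_1} z_1, …, μ^{m q_n} z_n) = (z'_0, …, z'_n). -/

import Mathlib

/-- Injectivity of the map `ℂP(q₀, m q₁, …, m qₙ) → ℂP(q₀, …, qₙ)` induced by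
`(z₀, z₁, …, zₙ) ↦ (z₀^m, z₁, …, zₙ)`, when `gcd(m, q₀) = 1`. -/
theorem complex_power_map_injective (n m : ℕ) (hm : 0 < m)
    (q : Fin (n + 1) → ℕ) (hq : ∀ i, 0 < q i) (hcop : Nat.gcd m (q 0) = 1)
    (z z' : Fin (n + 1) → ℂ) (hz : z ≠ 0) (hz' : z' ≠ 0)
    (h : ∃ l : ℂ, l ≠ 0 ∧ l ^ q 0 * (z 0) ^ m = (z' 0) ^ m ∧
      ∀ j, j ≠ 0 → l ^ q j * z j = z' j) :
    ∃ mu : ℂ, mu ≠ 0 ∧ mu ^ q 0 * z 0 = z' 0 ∧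
      ∀ j, j ≠ 0 → mu ^ (m * q j) * z j = z' j := by
  obtain ⟨l, hl, h0, hj⟩ := h
  obtain ⟨ρ, hρ⟩ := IsAlgClosed.exists_pow_nat_eq l hm
  have hρ0 : ρ ≠ 0 := by
    rintro rfl
    rw [zero_pow hm.ne'] at hρ
    exact hl hρ.symm
  by_cases hz0 : z 0 = 0
  · refine ⟨ρ, hρ0, ?_, ?_⟩
    · have hz'0 : z' 0 ^ m = 0 := by rw [← h0, hz0, zero_pow hm.ne', mul_zero]
      have : z' 0 = 0 := pow_eq_zero_iff hm.ne' |>.mp hz'0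
      simp [hz0, this]
    · intro j hjne
      rw [pow_mul, hρ]; exact hj j hjne
  · have hz'0 : z' 0 ≠ 0 := by
      intro hh
      rw [hh, zero_pow hm.ne'] at h0
      exact hz0 (pow_eq_zero_iff hm.ne' |>.mp
        ((mul_eq_zero.mp h0).resolve_left (pow_ne_zero _ hl)))
    rcases eq_or_lt_of_le (Nat.succ_le_of_lt hm) with hm1 | hm2
    · refine ⟨l, hl, ?_, ?_⟩
      · simpa [← hm1] using h0
      · intro j hjne; simpa [← hm1] using hj j hjne
    · set ω : ℂ := z' 0 / (z 0 * ρ ^ q 0) with hω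
      have hω0 : ω ≠ 0 := div_ne_zero hz'0 (mul_ne_zero hz0 (pow_ne_zero _ hρ0))
      have hωm : ω ^ m = 1 := by
        rw [hω, div_pow, mul_pow, ← pow_mul, mul_comm (q 0) m, pow_mul, hρ, ← h0,
          mul_comm]
        exact div_self (mul_ne_zero (pow_ne_zero _ hz0) (pow_ne_zero _ hl))
      obtain ⟨a, -, ha⟩ := Nat.exists_mul_mod_eq_one_of_coprime
        (Nat.coprime_comm.mp hcop) hm2
      have hωa : ω ^ (q 0 * a) = ω := by
        conv_lhs => rw [← Nat.div_add_mod (q 0 * a) m]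
        rw [pow_add, pow_mul, hωm, one_pow, one_mul, ha, pow_one]
      refine ⟨ρ * ω ^ a, mul_ne_zero hρ0 (pow_ne_zero _ hω0), ?_, ?_⟩
      · rw [mul_pow, ← pow_mul, mul_comm a (q 0), hωa, hω]
        field_simp
      · intro j hjne
        have h1 : ω ^ (a * (m * q j)) = 1 := by
          rw [mul_left_comm, pow_mul, hωm, one_pow]
        rw [mul_pow, ← pow_mul, pow_mul ρ, hρ, h1, mul_one]
        exact hj j hjne
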